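/- Minimax theorem for Kirszbraun functions. Let V be a real inner product space (or any nonempty set) and let f : ℝ^d × V × V → ℝ be a continuous Kirszbraun function. Let n ∈ ℕ and (y₁,x₁),…,(y_n,x_n) ∈ ℝ^d × V satisfy f(y_i − y_j, x_i, x_j) ≤ 0 for all 1 ≤ i, j ≤ n. Then for every x ∈ V there exists y in the convex hull of {y₁,…,y_n} such that f(y_i − y, x_i, x) ≤ 0 for all 1 ≤ i ≤ n. -/

import Mathlib

set_option autoImplicit false

set_option maxHeartbeats 800000

/-- A **Kirszbraun function**: `y ↦ f(y, x₁, x₂)` is convex and lower semicontinuous for all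
`x₁, x₂`, and the quadratic inequality (ii) holds for all convex combinations. -/
def IsKirszbraun {d : ℕ} {X : Type*} (f : (Fin d → ℝ) → X → X → ℝ) : Prop :=
  (∀ x₁ x₂ : X, ConvexOn ℝ Set.univ (fun y => f y x₁ x₂) ∧
      LowerSemicontinuous fun y => f y x₁ x₂) ∧
    ∀ (n : ℕ) (y : Fin n → Fin d → ℝ) (xs : Fin n → X) (x : X) (lam : Fin n → ℝ),
      (∀ i, 0 ≤ lam i) → (∑ i, lam i) = 1 →
        2 * ∑ i, lam i * f (y i - ∑ j, lam j • y j) (xs i) x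
          ≤ ∑ i, ∑ j, lam i * lam j * f (y i - y j) (xs i) (xs j)

/-- **Minimax theorem for Kirszbraun functions.**
If `f` is a continuous Kirszbraun function and `f(yᵢ − yⱼ, xᵢ, xⱼ) ≤ 0` for all `i, j`,
then for every `x` there is `y` in the convex hull of `{y₁, …, y_n}` with
`f(yᵢ − y, xᵢ, x) ≤ 0` for all `i`. -/
theorem kirszbraun_minimax {d : ℕ} {X : Type*} [Nonempty X]
    (f : (Fin d → ℝ) → X → X → ℝ) (hK : IsKirszbraun f)
    (hcont : ∀ x₁ x₂ : X, Continuous fun y => f y x₁ x₂)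
    (n : ℕ) (hn : 0 < n) (y : Fin n → Fin d → ℝ) (xs : Fin n → X)
    (hf : ∀ i j, f (y i - y j) (xs i) (xs j) ≤ 0) :
    ∀ x : X, ∃ z ∈ convexHull ℝ (Set.range y), ∀ i, f (y i - z) (xs i) x ≤ 0 := by
  intro x
  haveI : NeZero n := ⟨hn.ne'⟩
  haveI : Nonempty (Fin n) := ⟨⟨0, hn⟩⟩
  set K : Set (Fin n → ℝ) := stdSimplex ℝ (Fin n) with hKdef
  set g : Fin n → (Fin n → ℝ) → ℝ :=
    fun i lam => f (y i - ∑ j, lam j • y j) (xs i) x with hg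
  -- each g i is convex along convex combinations
  have gconv : ∀ (i : Fin n) (lam lam' : Fin n → ℝ) (a b : ℝ), 0 ≤ a → 0 ≤ b → a + b = 1 →
      g i (a • lam + b • lam') ≤ a * g i lam + b * g i lam' := by
    intro i lam lam' a b ha hb hab
    have key : y i - ∑ j, (a • lam + b • lam') j • y j
        = a • (y i - ∑ j, lam j • y j) + b • (y i - ∑ j, lam' j • y j) := by
      funext k
      simp only [Pi.sub_apply, Pi.add_apply, Pi.smul_apply, Finset.sum_apply, smul_eq_mul,
        add_mul]
      rw [Finset.sum_add_distrib]
      have e1 : ∑ j, a * lam j * y j k = a * ∑ j, lam j * y j k := by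
        rw [Finset.mul_sum]; simp [mul_assoc]
      have e2 : ∑ j, b * lam' j * y j k = b * ∑ j, lam' j * y j k := by
        rw [Finset.mul_sum]; simp [mul_assoc]
      rw [e1, e2]
      linear_combination (-(y i k)) * hab
    have := ((hK.1 (xs i) x).1.2 (Set.mem_univ (y i - ∑ j, lam j • y j))
      (Set.mem_univ (y i - ∑ j, lam' j • y j)) ha hb hab)
    simpa only [hg, key, smul_eq_mul] using this
  -- each g i is continuous
  have gcont : ∀ i : Fin n, Continuous (g i) := by
    intro i
    apply (hcont (xs i) x).comp
    exact continuous_const.sub (continuous_finset_sum _ fun j _ =>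
      (continuous_apply j).smul continuous_const)
  -- the max function
  have hne : (Finset.univ : Finset (Fin n)).Nonempty := Finset.univ_nonempty
  set F : (Fin n → ℝ) → ℝ := fun lam => Finset.univ.sup' hne (fun i => g i lam) with hF
  have Fcont : Continuous F := by
    have := Continuous.finset_sup'_apply hne (f := fun i : Fin n => g i) fun i _ => gcont i
    exact this
  obtain ⟨lam0, hlam0K, hmin⟩ := (isCompact_stdSimplex ℝ (Fin n)).exists_isMinOn
    ⟨_, ite_eq_mem_stdSimplex ℝ ⟨0, hn⟩⟩ Fcont.continuousOn
  have hmin' : ∀ lam ∈ K, F lam0 ≤ F lam := fun lam hl => hmin hl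
  -- the minimum value is ≤ 0
  have hc : F lam0 ≤ 0 := by
    by_contra hc
    push_neg at hc
    set c : ℝ := F lam0 with hcdef
    -- separation argument
    set A : Set (Fin n → ℝ) :=
      {t | ∃ lam ∈ K, ∀ i, g i lam ≤ t i} with hA
    set B : Set (Fin n → ℝ) := Set.univ.pi fun _ => Set.Iio c with hB
    have hBopen : IsOpen B := isOpen_set_pi Set.finite_univ fun _ _ => isOpen_Iio
    have hBconv : Convex ℝ B := convex_pi fun _ _ => convex_Iio c
    have hAconv : Convex ℝ A := by
      rintro t ⟨lam, hlamK, hlam⟩ t' ⟨lam', hlam'K, hlam'⟩ a b ha hb hab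
      refine ⟨a • lam + b • lam', (convex_stdSimplex ℝ (Fin n)) hlamK hlam'K ha hb hab, ?_⟩
      intro i
      calc g i (a • lam + b • lam') ≤ a * g i lam + b * g i lam' :=
            gconv i lam lam' a b ha hb hab
        _ ≤ a * t i + b * t' i := by
            gcongr <;> [exact hlam i; exact hlam' i]
        _ = (a • t + b • t') i := by simp [smul_eq_mul]
    have hdisj : Disjoint B A := by
      rw [Set.disjoint_left]
      rintro t htB ⟨lam, hlamK, hlam⟩
      have h1 : F lam < c := by
        rw [hF, Finset.sup'_lt_iff]
        intro i _
        exact lt_of_le_of_lt (hlam i) (htB i (Set.mem_univ i))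
      exact absurd (hmin' lam hlamK) (not_le.mpr h1)
    obtain ⟨L, u, hLB, hLA⟩ := geometric_hahn_banach_open hBconv hBopen hAconv hdisj
    set μ : Fin n → ℝ := fun i => L (fun j => if i = j then 1 else 0) with hμ
    have hLsum : ∀ t : Fin n → ℝ, L t = ∑ i, t i * μ i := by
      intro t
      conv_lhs => rw [pi_eq_sum_univ t]
      rw [map_sum]
      exact Finset.sum_congr rfl fun i _ => by rw [map_smul, smul_eq_mul]
    -- a useful element of B
    have hconstB : ∀ δ : ℝ, 0 < δ → (fun _ : Fin n => c - δ) ∈ B := by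
      intro δ hδ i _
      simpa using sub_lt_self c hδ
    -- coefficients are nonnegative
    have hμnonneg : ∀ i, 0 ≤ μ i := by
      intro i
      by_contra hneg
      push_neg at hneg
      set M : ℝ := max 1 ((u + 1 - ∑ j, (c - 1) * μ j) / (-μ i)) with hM
      have hM1 : (1 : ℝ) ≤ M := le_max_left _ _
      have hM2 : (u + 1 - ∑ j, (c - 1) * μ j) / (-μ i) ≤ M := le_max_right _ _
      set t : Fin n → ℝ := fun j => if j = i then c - 1 - M else c - 1 with ht
      have htB : t ∈ B := by
        intro j _
        simp only [ht, Set.mem_Iio]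
        split
        · nlinarith
        · linarith
      have hLt : L t = (∑ j, (c - 1) * μ j) - M * μ i := by
        rw [hLsum]
        have : ∀ j : Fin n, t j * μ j = (c - 1) * μ j - (if j = i then M * μ j else 0) := by
          intro j
          simp only [ht]
          split <;> ring
        rw [Finset.sum_congr rfl fun j _ => this j, Finset.sum_sub_distrib,
          Finset.sum_ite_eq' Finset.univ i fun j => M * μ j]
        simp
      have hlarge : u + 1 ≤ L t := by
        rw [hLt]
        have hpos : (0:ℝ) < -μ i := by linarith
        have := (div_le_iff₀ hpos).mp hM2
        linarith
      have := hLB t htB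
      linarith
    -- total mass is positive
    have hμsum : 0 < ∑ i, μ i := by
      rcases (Finset.sum_nonneg fun i _ => hμnonneg i).lt_or_eq with h | h
      · exact h
      have hall : ∀ i, μ i = 0 := by
        intro i
        have := (Finset.sum_eq_zero_iff_of_nonneg fun j _ => hμnonneg j).mp h.symm
        exact this i (Finset.mem_univ i)
      have hL0 : ∀ t : Fin n → ℝ, L t = 0 := by
        intro t; rw [hLsum]; simp [hall]
      have h1 : (0:ℝ) < u := by
        have := hLB _ (hconstB 1 one_pos)
        rwa [hL0] at this
      have h2 : u ≤ 0 := by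
        have : (fun i => g i lam0) ∈ A := ⟨lam0, hlam0K, fun i => le_refl _⟩
        have := hLA _ this
        rwa [hL0] at this
      linarith
    set s : ℝ := ∑ i, μ i with hs
    set ν : Fin n → ℝ := fun i => μ i / s with hν
    have hνnonneg : ∀ i, 0 ≤ ν i := fun i => div_nonneg (hμnonneg i) hμsum.le
    have hνsum : ∑ i, ν i = 1 := by
      rw [hν, ← Finset.sum_div]
      exact div_self hμsum.ne'
    have hνK : ν ∈ K := ⟨hνnonneg, hνsum⟩
    -- lower bound: c * s ≤ u
    have hcsu : c * s ≤ u := by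
      by_contra h
      push_neg at h
      have hδ : 0 < (c * s - u) / s := div_pos (by linarith) hμsum
      have := hLB _ (hconstB _ hδ)
      rw [hLsum] at this
      have heq : ∑ i, (c - (c * s - u) / s) * μ i = (c - (c * s - u) / s) * s := by
        rw [← Finset.mul_sum]
      rw [heq] at this
      have : c * s - ((c * s - u) / s) * s < u := by nlinarith
      rw [div_mul_cancel₀ _ hμsum.ne'] at this
      linarith
    -- upper bound from A : u ≤ ∑ μ i * g i ν
    have hAu : u ≤ ∑ i, g i ν * μ i := by
      have : (fun i => g i ν) ∈ A := ⟨ν, hνK, fun i => le_refl _⟩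
      have := hLA _ this
      rwa [hLsum] at this
    -- so c ≤ ∑ ν i * g i ν
    have hlower : c ≤ ∑ i, ν i * g i ν := by
      have : ∑ i, ν i * g i ν = (∑ i, g i ν * μ i) / s := by
        rw [Finset.sum_div]
        exact Finset.sum_congr rfl fun i _ => by rw [hν]; ring
      rw [this, le_div_iff₀ hμsum]
      calc c * s ≤ u := hcsu
        _ ≤ ∑ i, g i ν * μ i := hAu
    -- Kirszbraun inequality gives ∑ ν i * g i ν ≤ 0
    have hupper : ∑ i, ν i * g i ν ≤ 0 := by
      have h2 := hK.2 n y xs x ν hνnonneg hνsum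
      have hrhs : ∑ i, ∑ j, ν i * ν j * f (y i - y j) (xs i) (xs j) ≤ 0 := by
        apply Finset.sum_nonpos
        intro i _
        apply Finset.sum_nonpos
        intro j _
        exact mul_nonpos_of_nonneg_of_nonpos (mul_nonneg (hνnonneg i) (hνnonneg j)) (hf i j)
      have : 2 * ∑ i, ν i * g i ν ≤ 0 := le_trans h2 hrhs
      linarith
    linarith
  -- conclude
  refine ⟨∑ j, lam0 j • y j, ?_, ?_⟩
  · rw [← Finset.univ.centerMass_eq_of_sum_1 y hlam0K.2]
    exact Finset.centerMass_mem_convexHull _ (fun i _ => hlam0K.1 i)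
      (by rw [hlam0K.2]; norm_num) fun i _ => Set.mem_range_self i
  · intro i
    have : g i lam0 ≤ F lam0 := Finset.le_sup' (fun j => g j lam0) (Finset.mem_univ i)
    exact le_trans this hc
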